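/- Let V be a finite-dimensional ℚ_ℓ-vector space with an action of a group Γ and a weight decomposition, and suppose det(V) is a character of Γ of finite order while a semisimple element s ∈ Γ acts on a grading V = ⊕ₙ V(n) by pⁿ on V(n) (p a prime), and there is N with N^{2n}: V(−n) ↪ V(n) injective for all n ≥ 0. Then dim V(−n) = dim V(n) for all n. -/

import Mathlib

/-! STATEMENT 19: Let `V` be a finite-dimensional vector space with a grading
`V = ⨁ₙ V(n)` on which a semisimple element `s` acts by `pⁿ` on `V(n)` (`p` a prime of
infinite multiplicative order in the field), suppose `det V` is a character of finite
order (so `s` acts on `det V` by a root of unity), and suppose `N` is an operator with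
`N^{2n} : V(−n) → V(n)` injective for every `n ≥ 0` (and mapping `V(−n)` into `V(n)`).
Then `dim V(−n) = dim V(n)` for all `n`. -/

theorem graded_pieces_symmetric_of_finite_order_determinant
    {K V : Type*} [Field K] [AddCommGroup V] [Module K V] [FiniteDimensional K V]
    (p : ℕ) (hp : p.Prime) (hpne : (p : K) ≠ 0)
    (hporder : ∀ n : ℕ, 0 < n → (p : K) ^ n ≠ 1)
    -- the grading V = ⨁ₙ V(n)
    (g : ℤ → Submodule K V) (hsup : ⨆ n : ℤ, g n = ⊤) (hindep : iSupIndep g)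
    -- s acts on V(n) by pⁿ
    (s : V ≃ₗ[K] V) (hs : ∀ (n : ℤ), ∀ v ∈ g n, s v = ((p : K) ^ n) • v)
    -- det(V) is a character of finite order: det s is a root of unity
    (hdet : ∃ m : ℕ, 0 < m ∧ (LinearMap.det (s : V →ₗ[K] V)) ^ m = 1)
    -- N^{2n} : V(−n) → V(n) is injective
    (N : V →ₗ[K] V)
    (hmap : ∀ n : ℕ, ∀ v ∈ g (-(n : ℤ)), (N ^ (2 * n)) v ∈ g (n : ℤ))
    (hinj : ∀ n : ℕ, ∀ v ∈ g (-(n : ℤ)), (N ^ (2 * n)) v = 0 → v = 0) :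
    ∀ n : ℤ, Module.finrank K ↥(g (-n)) = Module.finrank K ↥(g n) := by
  classical
  set d : ℤ → ℕ := fun n => Module.finrank K (g n) with hd
  -- Step 1: dim V(-m) ≤ dim V(m)
  have hle : ∀ m : ℕ, d (-(m : ℤ)) ≤ d (m : ℤ) := by
    intro m
    let φ : g (-(m : ℤ)) →ₗ[K] g (m : ℤ) :=
      LinearMap.codRestrict _ ((N ^ (2 * m)).comp (g (-(m : ℤ))).subtype)
        (fun v => hmap m v v.2)
    have hφ : Function.Injective φ := by
      rw [← LinearMap.ker_eq_bot, LinearMap.ker_eq_bot']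
      intro v hv
      have h0 : (N ^ (2 * m)) (v : V) = 0 := congrArg Subtype.val hv
      exact Subtype.ext (hinj m v v.2 h0)
    exact LinearMap.finrank_le_finrank_of_injective hφ
  -- Step 2: internal direct sum, collected basis
  have hInt : DirectSum.IsInternal g :=
    (DirectSum.isInternal_submodule_iff_iSupIndep_and_iSup_eq_top g).2 ⟨hindep, hsup⟩
  let b : ∀ n : ℤ, Module.Basis (Fin (d n)) K (g n) := fun n => Module.finBasis K (g n)
  let B : Module.Basis (Σ n : ℤ, Fin (d n)) K V := hInt.collectedBasis b
  have : Fintype (Σ n : ℤ, Fin (d n)) := @Fintype.ofFinite _ (Module.Finite.finite_basis B)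
  -- Step 3: s is diagonal in this basis
  have hmat : LinearMap.toMatrix B B (s : V →ₗ[K] V)
      = Matrix.diagonal (fun j : Σ n : ℤ, Fin (d n) => (p : K) ^ j.1) := by
    ext i j
    rw [LinearMap.toMatrix_apply]
    have hj : (B j : V) ∈ g j.1 := hInt.collectedBasis_mem b j
    have : (s : V →ₗ[K] V) (B j) = ((p : K) ^ (j.1 : ℤ)) • (B j) := hs j.1 _ hj
    rw [this, map_smul, Module.Basis.repr_self]
    by_cases h : i = j
    · subst h; simp [Matrix.diagonal]
    · simp [Matrix.diagonal_apply_ne _ h, Finsupp.single_apply_eq_zero.2, Ne.symm h,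
        Finsupp.single_eq_of_ne (Ne.symm h)]
  -- Step 4: compute determinant
  have hzprod : ∀ (t : Finset (Σ n : ℤ, Fin (d n))),
      ∏ j ∈ t, (p : K) ^ (j.1 : ℤ) = (p : K) ^ (∑ j ∈ t, (j.1 : ℤ)) := by
    intro t
    induction t using Finset.induction with
    | empty => simp
    | insert _ _ hx ih =>
      rw [Finset.prod_insert hx, Finset.sum_insert hx, ih, zpow_add₀ hpne]
  have hdetval : LinearMap.det (s : V →ₗ[K] V) = (p : K) ^ (∑ j, ((j : Σ n : ℤ, Fin (d n)).1 : ℤ)) := by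
    rw [← LinearMap.det_toMatrix B, hmat, Matrix.det_diagonal, hzprod]
  -- Step 5: the sum of weights is zero
  have hone : ∀ k : ℤ, (p : K) ^ k = 1 → k = 0 := by
    intro k hk
    by_contra hk0
    rcases lt_or_gt_of_ne hk0 with hneg | hpos
    · have h1 : (p : K) ^ (-k) = 1 := by rw [zpow_neg, hk, inv_one]
      have h2 : (p : K) ^ (-k).toNat = 1 := by
        rw [← zpow_natCast, Int.toNat_of_nonneg (by omega)]; exact h1
      exact hporder _ (by omega) h2
    · have h2 : (p : K) ^ k.toNat = 1 := by
        rw [← zpow_natCast, Int.toNat_of_nonneg (by omega)]; exact hk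
      exact hporder _ (by omega) h2
  obtain ⟨m, hm, hdm⟩ := hdet
  have hS : (∑ j, ((j : Σ n : ℤ, Fin (d n)).1 : ℤ)) = 0 := by
    set S := ∑ j, ((j : Σ n : ℤ, Fin (d n)).1 : ℤ) with hSdef
    have : (p : K) ^ (S * (m : ℤ)) = 1 := by
      rw [zpow_mul, zpow_natCast, ← hdetval, hdm]
    have := hone _ this
    have hm' : (m : ℤ) ≠ 0 := by exact_mod_cast hm.ne'
    exact (mul_eq_zero.1 this).resolve_right hm'
  -- Step 6: rewrite the sum over the sigma type as a sum over the support
  set T : Finset ℤ := Finset.univ.image (Sigma.fst : (Σ n : ℤ, Fin (d n)) → ℤ) with hT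
  have hmemT : ∀ n : ℤ, d n ≠ 0 → n ∈ T := by
    intro n hn
    exact Finset.mem_image.2 ⟨⟨n, ⟨0, Nat.pos_of_ne_zero hn⟩⟩, Finset.mem_univ _, rfl⟩
  have hTmem : ∀ n ∈ T, d n ≠ 0 := by
    intro n hn
    rcases Finset.mem_image.1 hn with ⟨j, _, rfl⟩
    exact j.2.pos.ne'
  have hfibcard : ∀ n : ℤ,
      (Finset.univ.filter fun j : Σ n : ℤ, Fin (d n) => j.1 = n).card = d n := by
    intro n
    have hemb : (Finset.univ.filter fun j : Σ n : ℤ, Fin (d n) => j.1 = n)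
        = Finset.univ.map ⟨fun i : Fin (d n) => (⟨n, i⟩ : Σ n : ℤ, Fin (d n)),
            fun a c h => by simpa using h⟩ := by
      ext ⟨k, i⟩
      simp only [Finset.mem_filter, Finset.mem_univ, true_and, Finset.mem_map,
        Function.Embedding.coeFn_mk]
      constructor
      · rintro rfl; exact ⟨i, rfl⟩
      · rintro ⟨i', h⟩; exact (congrArg Sigma.fst h).symm
    rw [hemb, Finset.card_map, Finset.card_univ, Fintype.card_fin]
  have hsum : (∑ j, ((j : Σ n : ℤ, Fin (d n)).1 : ℤ)) = ∑ n ∈ T, n * (d n : ℤ) := by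
    have hfib := Finset.sum_fiberwise_of_maps_to (s := (Finset.univ : Finset (Σ n : ℤ, Fin (d n))))
      (t := T) (g := Sigma.fst)
      (fun j _ => Finset.mem_image_of_mem _ (Finset.mem_univ j))
      (fun j : Σ n : ℤ, Fin (d n) => (j.1 : ℤ))
    refine hfib.symm.trans ?_
    refine Finset.sum_congr rfl fun n hn => ?_
    calc (∑ j ∈ Finset.univ.filter fun j : Σ n : ℤ, Fin (d n) => j.1 = n, (j.1 : ℤ))
        = ∑ j ∈ Finset.univ.filter fun j : Σ n : ℤ, Fin (d n) => j.1 = n, n :=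
          Finset.sum_congr rfl fun j hj => (Finset.mem_filter.1 hj).2
      _ = _ := by rw [Finset.sum_const, hfibcard n, nsmul_eq_mul, mul_comm]
  -- Step 7: symmetrize
  set T' : Finset ℤ := T ∪ T.image (fun n => -n) with hT'
  have hsymm : ∀ n ∈ T', -n ∈ T' := by
    intro n hn
    rcases Finset.mem_union.1 hn with h | h
    · exact Finset.mem_union_right _ (Finset.mem_image_of_mem _ h)
    · rcases Finset.mem_image.1 h with ⟨a, ha, rfl⟩
      rw [neg_neg]; exact Finset.mem_union_left _ ha
  have hsum' : (∑ n ∈ T', n * (d n : ℤ)) = ∑ n ∈ T, n * (d n : ℤ) := by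
    refine (Finset.sum_subset Finset.subset_union_left ?_).symm
    intro n _ hn
    have : d n = 0 := by_contra fun h => hn (hmemT n h)
    simp [this]
  have hneg : (∑ n ∈ T', n * (d n : ℤ)) = ∑ n ∈ T', (-n) * (d (-n) : ℤ) := by
    refine Finset.sum_nbij' (fun n => -n) (fun n => -n) ?_ ?_ ?_ ?_ ?_
    · intro a ha; exact hsymm a ha
    · intro a ha; exact hsymm a ha
    · intro a _; simp
    · intro a _; simp
    · intro a _; simp
  have htermzero : ∀ n ∈ T', n * ((d n : ℤ) - (d (-n) : ℤ)) = 0 := by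
    have h2S : (∑ n ∈ T', n * ((d n : ℤ) - (d (-n) : ℤ))) = 0 := by
      have : (∑ n ∈ T', n * ((d n : ℤ) - (d (-n) : ℤ)))
          = (∑ n ∈ T', n * (d n : ℤ)) - (∑ n ∈ T', n * (d (-n) : ℤ)) := by
        rw [← Finset.sum_sub_distrib]; exact Finset.sum_congr rfl fun n _ => by ring
      rw [this]
      have h1 : (∑ n ∈ T', n * (d (-n) : ℤ)) = -(∑ n ∈ T', (-n) * (d (-n) : ℤ)) := by
        rw [← Finset.sum_neg_distrib]; exact Finset.sum_congr rfl fun n _ => by ring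
      rw [h1, ← hneg, hsum', ← hsum, hS]
      ring
    have hnonneg : ∀ n ∈ T', 0 ≤ n * ((d n : ℤ) - (d (-n) : ℤ)) := by
      intro n _
      rcases le_or_gt 0 n with h | h
      · refine mul_nonneg h ?_
        have := hle n.toNat
        rw [Int.toNat_of_nonneg h] at this
        omega
      · have h' : (0:ℤ) ≤ -n := by omega
        have := hle (-n).toNat
        rw [Int.toNat_of_nonneg h'] at this
        simp only [neg_neg] at this
        have h2 : (d n : ℤ) - (d (-n) : ℤ) ≤ 0 := by omega
        exact mul_nonneg_of_nonpos_of_nonpos h.le h2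
    intro n hn
    exact (Finset.sum_eq_zero_iff_of_nonneg hnonneg).1 h2S n hn
  -- Step 8: conclude
  have key : ∀ m : ℕ, d (-(m : ℤ)) = d (m : ℤ) := by
    intro m
    rcases Nat.eq_zero_or_pos m with rfl | hm0
    · simp
    by_cases hmem : (m : ℤ) ∈ T'
    · have := htermzero (m : ℤ) hmem
      have hm' : (m : ℤ) ≠ 0 := by exact_mod_cast hm0.ne'
      have := (mul_eq_zero.1 this).resolve_left hm'
      omega
    · have h1 : d (m : ℤ) = 0 := by
        by_contra h
        exact hmem (Finset.mem_union_left _ (hmemT _ h))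
      have := hle m
      omega
  intro n
  rcases le_or_gt 0 n with h | h
  · have := key n.toNat
    rwa [Int.toNat_of_nonneg h] at this
  · have := key (-n).toNat
    rw [Int.toNat_of_nonneg (by omega)] at this
    simpa [neg_neg] using this.symm
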